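/- Let 𝓕 be the exponential distance matrix of the complete bipartite graph K_{s,t} and let q be a nonzero indeterminate with q ≠ ±1. Then det(𝓕) = (1−q²)^{s+t−1}·[1 − q²(s−1)(t−1)]. -/

import Mathlib

open Matrix

/-- The exponential distance matrix of a connected graph `G`:
the `(u,v)` entry is `q ^ d(u,v)`. -/
noncomputable def expDistMatrix {V : Type*} (G : SimpleGraph V) (q : ℝ) : Matrix V V ℝ :=
  Matrix.of fun u v => q ^ (G.dist u v)

section aux

variable {s t : ℕ}

/-- The indicator matrix. -/
noncomputable def KBW (s t : ℕ) : Matrix (Fin 2) (Fin s ⊕ Fin t) ℝ :=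
  Matrix.of fun i v =>
    Sum.elim (fun _ : Fin s => if i = 0 then (1:ℝ) else 0)
      (fun _ : Fin t => if i = 1 then (1:ℝ) else 0) v

lemma KBW_mul_transpose (s t : ℕ) :
    KBW s t * (KBW s t)ᵀ = !![(s : ℝ), 0; 0, (t : ℝ)] := by
  ext i j
  fin_cases i <;> fin_cases j <;>
    simp [KBW, Matrix.mul_apply, Fintype.sum_sum_type, Finset.sum_ite_eq,
      Finset.card_univ]

lemma dist_cb_inl_inr (hs : 0 < s) (ht : 0 < t) (a : Fin s) (b : Fin t) :
    (completeBipartiteGraph (Fin s) (Fin t)).dist (Sum.inl a) (Sum.inr b) = 1 := by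
  rw [SimpleGraph.dist_eq_one_iff_adj]; simp

lemma dist_cb_inr_inl (hs : 0 < s) (ht : 0 < t) (a : Fin s) (b : Fin t) :
    (completeBipartiteGraph (Fin s) (Fin t)).dist (Sum.inr b) (Sum.inl a) = 1 := by
  rw [SimpleGraph.dist_eq_one_iff_adj]; simp

lemma dist_cb_inl_inl (hs : 0 < s) (ht : 0 < t) (a a' : Fin s) (h : a ≠ a') :
    (completeBipartiteGraph (Fin s) (Fin t)).dist (Sum.inl a) (Sum.inl a') = 2 := by
  set G := completeBipartiteGraph (Fin s) (Fin t) with hG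
  have h1 : G.Adj (Sum.inl a) (Sum.inr (⟨0, ht⟩ : Fin t)) := by simp [hG]
  have h2 : G.Adj (Sum.inr (⟨0, ht⟩ : Fin t)) (Sum.inl a') := by simp [hG]
  have hle : G.dist (Sum.inl a) (Sum.inl a') ≤ 2 := by
    have := SimpleGraph.dist_le (SimpleGraph.Walk.cons h1 (SimpleGraph.Walk.cons h2
      SimpleGraph.Walk.nil))
    simpa using this
  have hne0 : G.dist (Sum.inl a) (Sum.inl a') ≠ 0 := by
    rw [SimpleGraph.dist_ne_zero_iff_ne_and_reachable]
    refine ⟨by simp [h], ?_⟩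
    exact (SimpleGraph.Walk.cons h1 (SimpleGraph.Walk.cons h2
      SimpleGraph.Walk.nil)).reachable
  have hne1 : G.dist (Sum.inl a) (Sum.inl a') ≠ 1 := by
    rw [Ne, SimpleGraph.dist_eq_one_iff_adj]
    simp [hG]
  omega

lemma dist_cb_inr_inr (hs : 0 < s) (ht : 0 < t) (b b' : Fin t) (h : b ≠ b') :
    (completeBipartiteGraph (Fin s) (Fin t)).dist (Sum.inr b) (Sum.inr b') = 2 := by
  set G := completeBipartiteGraph (Fin s) (Fin t) with hG
  have h1 : G.Adj (Sum.inr b) (Sum.inl (⟨0, hs⟩ : Fin s)) := by simp [hG]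
  have h2 : G.Adj (Sum.inl (⟨0, hs⟩ : Fin s)) (Sum.inr b') := by simp [hG]
  have hle : G.dist (Sum.inr b) (Sum.inr b') ≤ 2 := by
    have := SimpleGraph.dist_le (SimpleGraph.Walk.cons h1 (SimpleGraph.Walk.cons h2
      SimpleGraph.Walk.nil))
    simpa using this
  have hne0 : G.dist (Sum.inr b) (Sum.inr b') ≠ 0 := by
    rw [SimpleGraph.dist_ne_zero_iff_ne_and_reachable]
    refine ⟨by simp [h], ?_⟩
    exact (SimpleGraph.Walk.cons h1 (SimpleGraph.Walk.cons h2
      SimpleGraph.Walk.nil)).reachable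
  have hne1 : G.dist (Sum.inr b) (Sum.inr b') ≠ 1 := by
    rw [Ne, SimpleGraph.dist_eq_one_iff_adj]
    simp [hG]
  omega

lemma expDistMatrix_cb_eq (hs : 0 < s) (ht : 0 < t) (q : ℝ) :
    expDistMatrix (completeBipartiteGraph (Fin s) (Fin t)) q
      = (1 - q ^ 2) • (1 : Matrix (Fin s ⊕ Fin t) (Fin s ⊕ Fin t) ℝ)
        + (KBW s t)ᵀ * (!![q^2, q; q, q^2] * KBW s t) := by
  ext u v
  have key : ∀ u v : Fin s ⊕ Fin t,
      ((KBW s t)ᵀ * (!![q^2, q; q, q^2] * KBW s t)) u v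
        = Sum.elim (fun _ : Fin s => Sum.elim (fun _ : Fin s => q^2)
            (fun _ : Fin t => q) v) (fun _ : Fin t => Sum.elim (fun _ : Fin s => q)
            (fun _ => q^2) v) u := by
    intro u v
    cases u <;> cases v <;>
      simp [KBW, Matrix.mul_apply, Fin.sum_univ_two, Matrix.vecHead, Matrix.vecTail,
        Function.comp]
  rw [Matrix.add_apply, key]
  cases u with
  | inl a => cases v with
    | inl a' =>
      rcases eq_or_ne a a' with rfl | hne
      · simp [expDistMatrix, SimpleGraph.dist_self, Matrix.one_apply]
      · simp [expDistMatrix, dist_cb_inl_inl hs ht a a' hne, Matrix.one_apply,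
          Sum.inl.injEq, hne]
    | inr b => simp [expDistMatrix, dist_cb_inl_inr hs ht a b, Matrix.one_apply]
  | inr b => cases v with
    | inl a => simp [expDistMatrix, dist_cb_inr_inl hs ht a b, Matrix.one_apply]
    | inr b' =>
      rcases eq_or_ne b b' with rfl | hne
      · simp [expDistMatrix, SimpleGraph.dist_self, Matrix.one_apply]
      · simp [expDistMatrix, dist_cb_inr_inr hs ht b b' hne, Matrix.one_apply,
          Sum.inr.injEq, hne]

end aux

/-- `det 𝓕(K_{s,t}) = (1-q²)^(s+t-1) * (1 - q²(s-1)(t-1))`. -/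
theorem det_expDistMatrix_completeBipartite (s t : ℕ) (hs : 0 < s) (ht : 0 < t)
    (q : ℝ) (hq0 : q ≠ 0) (hq1 : q ≠ 1) (hq1' : q ≠ -1) :
    (expDistMatrix (completeBipartiteGraph (Fin s) (Fin t)) q).det
      = (1 - q ^ 2) ^ (s + t - 1)
        * (1 - q ^ 2 * ((s : ℝ) - 1) * ((t : ℝ) - 1)) := by
  set c : ℝ := 1 - q ^ 2 with hc
  have hcne : c ≠ 0 := by
    have : (1 - q) * (1 + q) ≠ 0 :=
      mul_ne_zero (sub_ne_zero.mpr (Ne.symm hq1)) (by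
        intro h
        exact hq1' (by linarith))
    intro h; apply this; rw [hc] at h; nlinarith [h]
  rw [expDistMatrix_cb_eq hs ht q]
  have hrw : c • (1 : Matrix (Fin s ⊕ Fin t) (Fin s ⊕ Fin t) ℝ)
        + (KBW s t)ᵀ * (!![q^2, q; q, q^2] * KBW s t)
      = c • (1 + (c⁻¹ • (KBW s t)ᵀ) * (!![q^2, q; q, q^2] * KBW s t)) := by
    rw [smul_add, Matrix.smul_mul, smul_smul, mul_inv_cancel₀ hcne, one_smul]
  rw [hrw, Matrix.det_smul, Matrix.det_one_add_mul_comm]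
  have hmm : (!![q^2, q; q, q^2] * KBW s t) * (c⁻¹ • (KBW s t)ᵀ)
      = c⁻¹ • (!![q^2, q; q, q^2] * !![(s : ℝ), 0; 0, (t : ℝ)]) := by
    rw [Matrix.mul_smul, Matrix.mul_assoc, KBW_mul_transpose]
  rw [hmm]
  have hcard : Fintype.card (Fin s ⊕ Fin t) = s + t := by simp
  rw [hcard]
  have h2 : (1 + c⁻¹ • (!![q^2, q; q, q^2] * !![(s : ℝ), 0; 0, (t : ℝ)])).det
      = c⁻¹ * (1 - q ^ 2 * ((s : ℝ) - 1) * ((t : ℝ) - 1)) := by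
    rw [show (!![q^2, q; q, q^2] * !![(s : ℝ), 0; 0, (t : ℝ)])
        = !![q^2 * s, q * t; q * s, q^2 * t] by
      ext i j; fin_cases i <;> fin_cases j <;> simp [Matrix.mul_apply, Fin.sum_univ_two]]
    rw [Matrix.det_fin_two]
    simp only [Matrix.add_apply, Matrix.smul_apply, smul_eq_mul, Matrix.one_apply_eq,
      Matrix.one_apply_ne (show (0 : Fin 2) ≠ 1 by decide),
      Matrix.one_apply_ne (show (1 : Fin 2) ≠ 0 by decide),
      Matrix.cons_val_zero, Matrix.cons_val_one, Matrix.head_cons, Matrix.head_fin_const,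
      Matrix.of_apply, Matrix.cons_val', Matrix.empty_val', Matrix.cons_val_fin_one]
    field_simp
    ring
  rw [h2]
  have hpow : c ^ (s + t) = c ^ (s + t - 1) * c := by
    rw [← pow_succ]
    congr 1
    omega
  rw [hpow]
  field_simp
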